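/- For every binary multilinear polynomial p over a prime finite field F in variables x₁,...,xₙ, there exists a unique reduced ordered BDD w with ⟦w⟧ = p. -/

import Mathlib

open MvPolynomial

/-- Degree reduction `δ_x`: replaces every power `x^j` (`j ≥ 1`) in each monomial by `x`. -/
noncomputable def deltaRed {V F : Type*} [CommRing F] [DecidableEq V]
    (x : V) (p : MvPolynomial V F) : MvPolynomial V F :=
  p.support.sum fun m => monomial (Finsupp.update m x (min (m x) 1)) (coeff m p)

/-- Partial evaluation `[x := a] p`: substitute the constant `a` for variable `x`. -/
noncomputable def pevalVar {V F : Type*} [CommRing F] [DecidableEq V]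
    (x : V) (a : F) (p : MvPolynomial V F) : MvPolynomial V F :=
  aeval (fun y => if y = x then C a else X y) p

/-- A polynomial is multilinear if every variable has degree at most 1 in every monomial. -/
def Multilinear {V F : Type*} [CommSemiring F] (p : MvPolynomial V F) : Prop :=
  ∀ m ∈ p.support, ∀ x : V, m x ≤ 1

/-- Binary equivalence: `p` and `q` agree on all assignments with values in `{0,1}`. -/
def BinaryEquiv {V F : Type*} [CommSemiring F] (p q : MvPolynomial V F) : Prop :=
  ∀ σ : V → F, (∀ x, σ x = 0 ∨ σ x = 1) → eval σ p = eval σ q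

/-- A polynomial is binary if it takes values in `{0,1}` on all `{0,1}` assignments. -/
def BinaryPoly {V F : Type*} [CommSemiring F] (p : MvPolynomial V F) : Prop :=
  ∀ σ : V → F, (∀ x, σ x = 0 ∨ σ x = 1) → eval σ p = 0 ∨ eval σ p = 1

/-- Syntax of (not necessarily reduced) ordered binary decision diagrams over variables `Fin n`. -/
inductive BDD (n : ℕ) where
  | tru  : BDD n
  | fls  : BDD n
  | node (i : Fin n) (u v : BDD n) : BDD n
deriving DecidableEq

/-- Level of a BDD: `⟨true⟩, ⟨false⟩` have level 0; a node on variable `x_i` has level `i+1`. -/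
def BDD.level {n : ℕ} : BDD n → ℕ
  | tru => 0
  | fls => 0
  | node i _ _ => i.val + 1

/-- Well-formedness (reduced, ordered): children are distinct, of lower level and well-formed. -/
def BDD.wf {n : ℕ} : BDD n → Prop
  | tru => True
  | fls => True
  | node i u v => u ≠ v ∧ u.level ≤ i.val ∧ v.level ≤ i.val ∧ u.wf ∧ v.wf

/-- Arithmetisation of a BDD. -/
noncomputable def BDD.arith {n : ℕ} (F : Type*) [CommRing F] : BDD n → MvPolynomial (Fin n) F
  | tru => 1
  | fls => 0
  | node i u v => (1 - MvPolynomial.X i) * u.arith F + MvPolynomial.X i * v.arith F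


section PevalVar

variable {V F : Type*} [CommRing F] [DecidableEq V]

lemma pevalVar_monomial (x : V) (a : F) (m : V →₀ ℕ) (c : F) :
    pevalVar x a (monomial m c) = monomial (Finsupp.update m x 0) (c * a ^ (m x)) := by
  classical
  have hprod : (m.prod fun i k => (if i = x then C a else (X i : MvPolynomial V F)) ^ k)
      = (C a : MvPolynomial V F) ^ (m x)
        * ((m.erase x).prod fun i k => (X i : MvPolynomial V F) ^ k) := by
    by_cases hx : x ∈ m.support
    · rw [Finsupp.prod, ← Finset.mul_prod_erase _ _ hx, if_pos rfl]
      congr 1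
      rw [Finsupp.prod, Finsupp.support_erase]
      refine Finset.prod_congr rfl fun i hi => ?_
      rw [Finset.mem_erase] at hi
      rw [if_neg hi.1, Finsupp.erase_ne hi.1]
    · have h0 : m x = 0 := Finsupp.notMem_support_iff.mp hx
      rw [h0, pow_zero, one_mul, Finsupp.erase_of_notMem_support hx]
      refine Finsupp.prod_congr fun i hi => ?_
        
      have hix : i ≠ x := fun h => hx (h ▸ hi)
      rw [if_neg hix]
  rw [pevalVar, aeval_monomial, ← Finsupp.erase_eq_update_zero, monomial_eq, hprod,
    algebraMap_eq, map_mul, map_pow]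
  ring

lemma pevalVar_eq_sum (x : V) (a : F) (p : MvPolynomial V F) :
    pevalVar x a p
      = ∑ m ∈ p.support, monomial (Finsupp.update m x 0) (coeff m p * a ^ (m x)) := by
  conv_lhs => rw [p.as_sum]
  unfold pevalVar
  rw [map_sum]
  exact Finset.sum_congr rfl fun m _ => pevalVar_monomial x a m (coeff m p)

lemma eval_pevalVar (x : V) (a : F) (σ : V → F) (p : MvPolynomial V F) :
    eval σ (pevalVar x a p) = eval (Function.update σ x a) p := by
  induction p using MvPolynomial.induction_on with
  | C c => simp [pevalVar]
  | add p r hp hr => unfold pevalVar at *; rw [map_add, map_add, map_add, hp, hr]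
  | mul_X p i hp =>
    unfold pevalVar at *
    rw [map_mul, map_mul, aeval_X, map_mul, hp, eval_X, Function.update_apply]
    congr 1
    split <;> simp

lemma support_pevalVar {x : V} {a : F} {p : MvPolynomial V F} {m' : V →₀ ℕ}
    (h : m' ∈ (pevalVar x a p).support) :
    ∃ m ∈ p.support, m' = Finsupp.update m x 0 := by
  classical
  rw [pevalVar_eq_sum] at h
  obtain ⟨m, hm, hm'⟩ := Finset.mem_biUnion.mp (MvPolynomial.support_sum h)
  refine ⟨m, hm, ?_⟩
  have := MvPolynomial.support_monomial_subset hm'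
  exact Finset.mem_singleton.mp this

lemma pevalVar_eq_self {x : V} (a : F) {p : MvPolynomial V F}
    (h : ∀ m ∈ p.support, m x = 0) : pevalVar x a p = p := by
  rw [pevalVar_eq_sum]
  conv_rhs => rw [p.as_sum]
  refine Finset.sum_congr rfl fun m hm => ?_
  have h0 := h m hm
  have hu : Finsupp.update m x 0 = m := by
    conv_rhs => rw [← Finsupp.update_self m x]
    rw [h0]
  rw [hu, h0, pow_zero, mul_one]

lemma multilinear_decomp {p : MvPolynomial V F} (hmul : Multilinear p) (x : V) :
    p = (1 - X x) * pevalVar x 0 p + X x * pevalVar x 1 p := by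
  conv_lhs => rw [p.as_sum]
  rw [pevalVar_eq_sum, pevalVar_eq_sum, Finset.mul_sum, Finset.mul_sum,
    ← Finset.sum_add_distrib]
  refine Finset.sum_congr rfl fun m hm => ?_
  rcases Nat.le_one_iff_eq_zero_or_eq_one.mp (hmul m hm x) with h | h
  · have hu : Finsupp.update m x 0 = m := by
      conv_rhs => rw [← Finsupp.update_self m x]
      rw [h]
    rw [hu, h, pow_zero, pow_zero, mul_one]
    ring
  · have hu : m = Finsupp.single x 1 + Finsupp.update m x 0 := by
      ext y
      by_cases hy : y = x
      · subst hy
        simp [h, Finsupp.coe_update]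
      · simp [Finsupp.single_apply, Finsupp.coe_update, Function.update_apply, hy,
          Ne.symm hy]
    rw [h, pow_one, pow_one, mul_zero, mul_one, monomial_zero, mul_zero, zero_add]
    rw [← pow_one (X x : MvPolynomial V F), ← monomial_single_add, ← hu]

end PevalVar

section Derived

variable {V F : Type*} [CommRing F] [DecidableEq V]

lemma multilinear_pevalVar {p : MvPolynomial V F} (hmul : Multilinear p) (x : V) (a : F) :
    Multilinear (pevalVar x a p) := by
  intro m' hm' y
  obtain ⟨m, hm, rfl⟩ := support_pevalVar hm'
  by_cases hy : y = x
  · subst hy; simp [Finsupp.coe_update]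
  · have : Finsupp.update m x 0 y = m y := by
      simp [Finsupp.coe_update, Function.update_apply, hy]
    rw [this]
    exact hmul m hm y

lemma binaryPoly_pevalVar {p : MvPolynomial V F} (hbin : BinaryPoly p) (x : V) {a : F}
    (ha : a = 0 ∨ a = 1) : BinaryPoly (pevalVar x a p) := by
  intro σ hσ
  rw [eval_pevalVar]
  refine hbin _ fun y => ?_
  rw [Function.update_apply]
  split
  · exact ha
  · exact hσ y

end Derived

/-- All variables occurring in `p` have index `< k`. -/
def VarsLt {F : Type*} [CommSemiring F] {n : ℕ} (k : ℕ) (p : MvPolynomial (Fin n) F) : Prop :=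
  ∀ m ∈ p.support, ∀ y : Fin n, m y ≠ 0 → y.val < k

section FinSide

variable {F : Type*} [CommRing F] {n : ℕ}

lemma varsLt_pevalVar {p : MvPolynomial (Fin n) F} {k : ℕ} (hv : VarsLt (k + 1) p)
    (h : k < n) (a : F) : VarsLt k (pevalVar (⟨k, h⟩ : Fin n) a p) := by
  intro m' hm' y hy
  obtain ⟨m, hm, rfl⟩ := support_pevalVar hm'
  by_cases hyx : y = (⟨k, h⟩ : Fin n)
  · exfalso
    apply hy
    subst hyx
    simp [Finsupp.coe_update]
  · have heq : Finsupp.update m (⟨k, h⟩ : Fin n) 0 y = m y := by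
      simp [Finsupp.coe_update, Function.update_apply, hyx]
    rw [heq] at hy
    have := hv m hm y hy
    have hne : y.val ≠ k := fun hk => hyx (Fin.ext hk)
    omega

lemma varsLt_zero_eq_C {p : MvPolynomial (Fin n) F} (hv : VarsLt 0 p) :
    p = C (constantCoeff p) := by
  ext m
  by_cases hm : m = 0
  · subst hm
    simp [coeff_C, constantCoeff_eq]
  · rw [coeff_C, if_neg (fun h => hm h.symm)]
    by_contra hc
    have hms : m ∈ p.support := by
      rw [MvPolynomial.mem_support_iff]
      exact hc
    obtain ⟨y, hy⟩ : ∃ y, m y ≠ 0 := by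
      by_contra hall
      push_neg at hall
      exact hm (Finsupp.ext hall)
    exact absurd (hv m hms y hy) (Nat.not_lt_zero _)

/-- Substituting a variable above the level of a BDD leaves its arithmetisation unchanged. -/
lemma pevalVar_arith_fix (w : BDD n) (hw : w.wf) (j : Fin n) (a : F)
    (h : w.level ≤ j.val) : pevalVar j a (w.arith F) = w.arith F := by
  induction w with
  | tru => unfold pevalVar BDD.arith; rw [map_one]
  | fls => unfold pevalVar BDD.arith; rw [map_zero]
  | node i u v hu hv =>
    obtain ⟨hne, hlu, hlv, hwu, hwv⟩ := hw
    have hlev : i.val + 1 ≤ j.val := h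
    have hij : i ≠ j := fun hh => by rw [hh] at hlev; omega
    have h1 := hu hwu (le_trans hlu (by omega))
    have h2 := hv hwv (le_trans hlv (by omega))
    unfold pevalVar at h1 h2 ⊢
    simp only [BDD.arith]
    rw [map_add, map_mul, map_mul, map_sub, map_one, aeval_X, if_neg hij, h1, h2]

lemma pevalVar_arith_node (i : Fin n) (u v : BDD n) (hw : (BDD.node i u v).wf) (b : F) :
    pevalVar i b ((BDD.node i u v).arith F) = (1 - C b) * u.arith F + C b * v.arith F := by
  obtain ⟨hne, hlu, hlv, hwu, hwv⟩ := hw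
  have h1 := pevalVar_arith_fix u hwu i b hlu
  have h2 := pevalVar_arith_fix v hwv i b hlv
  unfold pevalVar at h1 h2 ⊢
  simp only [BDD.arith]
  rw [map_add, map_mul, map_mul, map_sub, map_one, aeval_X, if_pos rfl, h1, h2]

lemma pevalVar_arith_node_zero (i : Fin n) (u v : BDD n) (hw : (BDD.node i u v).wf) :
    pevalVar i (0 : F) ((BDD.node i u v).arith F) = u.arith F := by
  rw [pevalVar_arith_node i u v hw 0, map_zero]
  ring

lemma pevalVar_arith_node_one (i : Fin n) (u v : BDD n) (hw : (BDD.node i u v).wf) :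
    pevalVar i (1 : F) ((BDD.node i u v).arith F) = v.arith F := by
  rw [pevalVar_arith_node i u v hw 1, map_one]
  ring

end FinSide

/-- Size of a BDD term. -/
def BDD.size {n : ℕ} : BDD n → ℕ
  | tru => 1
  | fls => 1
  | node _ u v => u.size + v.size + 1

lemma BDD.size_pos {n : ℕ} (w : BDD n) : 1 ≤ w.size := by
  cases w <;> simp [BDD.size]

section Inj

variable {F : Type*} [CommRing F] [Nontrivial F] {n : ℕ}

lemma arith_injective_aux :
    ∀ (N : ℕ) (w₁ w₂ : BDD n), w₁.size + w₂.size ≤ N →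
      w₁.wf → w₂.wf → w₁.arith F = w₂.arith F → w₁ = w₂ := by
  intro N
  induction N with
  | zero =>
    intro w₁ w₂ hs _ _ _
    have := w₁.size_pos
    omega
  | succ N IH =>
    intro w₁ w₂ hs h₁ h₂ heq
    cases w₁ with
    | tru =>
      cases w₂ with
      | tru => rfl
      | fls => exact absurd heq one_ne_zero
      | node j u v =>
        exfalso
        have e0 := congrArg (pevalVar j (0 : F)) heq
        have e1 := congrArg (pevalVar j (1 : F)) heq
        rw [pevalVar_arith_node_zero j u v h₂] at e0
        rw [pevalVar_arith_node_one j u v h₂] at e1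
        have htop : pevalVar j (0 : F) ((BDD.tru : BDD n).arith F)
            = pevalVar j (1 : F) ((BDD.tru : BDD n).arith F) := by
          unfold pevalVar BDD.arith
          rw [map_one, map_one]
        have huv : u.arith F = v.arith F := by rw [← e0, ← e1, htop]
        have hsz : u.size + v.size ≤ N := by
          simp only [BDD.size] at hs
          omega
        exact h₂.1 (IH u v hsz h₂.2.2.2.1 h₂.2.2.2.2 huv)
    | fls =>
      cases w₂ with
      | tru => exact absurd heq zero_ne_one
      | fls => rfl
      | node j u v =>
        exfalso
        have e0 := congrArg (pevalVar j (0 : F)) heq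
        have e1 := congrArg (pevalVar j (1 : F)) heq
        rw [pevalVar_arith_node_zero j u v h₂] at e0
        rw [pevalVar_arith_node_one j u v h₂] at e1
        have htop : pevalVar j (0 : F) ((BDD.fls : BDD n).arith F)
            = pevalVar j (1 : F) ((BDD.fls : BDD n).arith F) := by
          unfold pevalVar BDD.arith
          rw [map_zero, map_zero]
        have huv : u.arith F = v.arith F := by rw [← e0, ← e1, htop]
        have hsz : u.size + v.size ≤ N := by
          simp only [BDD.size] at hs
          omega
        exact h₂.1 (IH u v hsz h₂.2.2.2.1 h₂.2.2.2.2 huv)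
    | node i u v =>
      cases w₂ with
      | tru =>
        exfalso
        have e0 := congrArg (pevalVar i (0 : F)) heq
        have e1 := congrArg (pevalVar i (1 : F)) heq
        rw [pevalVar_arith_node_zero i u v h₁] at e0
        rw [pevalVar_arith_node_one i u v h₁] at e1
        have htop : pevalVar i (0 : F) ((BDD.tru : BDD n).arith F)
            = pevalVar i (1 : F) ((BDD.tru : BDD n).arith F) := by
          unfold pevalVar BDD.arith
          rw [map_one, map_one]
        have huv : u.arith F = v.arith F := by rw [e0, e1, htop]
        have hsz : u.size + v.size ≤ N := by
          simp only [BDD.size] at hs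
          omega
        exact h₁.1 (IH u v hsz h₁.2.2.2.1 h₁.2.2.2.2 huv)
      | fls =>
        exfalso
        have e0 := congrArg (pevalVar i (0 : F)) heq
        have e1 := congrArg (pevalVar i (1 : F)) heq
        rw [pevalVar_arith_node_zero i u v h₁] at e0
        rw [pevalVar_arith_node_one i u v h₁] at e1
        have htop : pevalVar i (0 : F) ((BDD.fls : BDD n).arith F)
            = pevalVar i (1 : F) ((BDD.fls : BDD n).arith F) := by
          unfold pevalVar BDD.arith
          rw [map_zero, map_zero]
        have huv : u.arith F = v.arith F := by rw [e0, e1, htop]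
        have hsz : u.size + v.size ≤ N := by
          simp only [BDD.size] at hs
          omega
        exact h₁.1 (IH u v hsz h₁.2.2.2.1 h₁.2.2.2.2 huv)
      | node j u' v' =>
        rcases lt_trichotomy i.val j.val with hij | hij | hij
        · exfalso
          have hfix0 : pevalVar j (0 : F) ((BDD.node i u v).arith F)
              = (BDD.node i u v).arith F :=
            pevalVar_arith_fix _ h₁ j 0 (by show i.val + 1 ≤ j.val; omega)
          have hfix1 : pevalVar j (1 : F) ((BDD.node i u v).arith F)
              = (BDD.node i u v).arith F :=
            pevalVar_arith_fix _ h₁ j 1 (by show i.val + 1 ≤ j.val; omega)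
          have e0 := congrArg (pevalVar j (0 : F)) heq
          have e1 := congrArg (pevalVar j (1 : F)) heq
          rw [hfix0, pevalVar_arith_node_zero j u' v' h₂] at e0
          rw [hfix1, pevalVar_arith_node_one j u' v' h₂] at e1
          have huv : u'.arith F = v'.arith F := by rw [← e0, ← e1]
          have hsz : u'.size + v'.size ≤ N := by
            have := u.size_pos
            have := v.size_pos
            simp only [BDD.size] at hs
            omega
          exact h₂.1 (IH u' v' hsz h₂.2.2.2.1 h₂.2.2.2.2 huv)
        · have hij' : i = j := Fin.ext hij
          subst hij'
          have e0 := congrArg (pevalVar i (0 : F)) heq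
          have e1 := congrArg (pevalVar i (1 : F)) heq
          rw [pevalVar_arith_node_zero i u v h₁, pevalVar_arith_node_zero i u' v' h₂] at e0
          rw [pevalVar_arith_node_one i u v h₁, pevalVar_arith_node_one i u' v' h₂] at e1
          have hp1 := u.size_pos
          have hp2 := u'.size_pos
          have hp3 := v.size_pos
          have hp4 := v'.size_pos
          simp only [BDD.size] at hs
          have hu := IH u u' (by omega) h₁.2.2.2.1 h₂.2.2.2.1 e0
          have hv := IH v v' (by omega) h₁.2.2.2.2 h₂.2.2.2.2 e1
          rw [hu, hv]
        · exfalso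
          have hfix0 : pevalVar i (0 : F) ((BDD.node j u' v').arith F)
              = (BDD.node j u' v').arith F :=
            pevalVar_arith_fix _ h₂ i 0 (by show j.val + 1 ≤ i.val; omega)
          have hfix1 : pevalVar i (1 : F) ((BDD.node j u' v').arith F)
              = (BDD.node j u' v').arith F :=
            pevalVar_arith_fix _ h₂ i 1 (by show j.val + 1 ≤ i.val; omega)
          have e0 := congrArg (pevalVar i (0 : F)) heq
          have e1 := congrArg (pevalVar i (1 : F)) heq
          rw [hfix0, pevalVar_arith_node_zero i u v h₁] at e0
          rw [hfix1, pevalVar_arith_node_one i u v h₁] at e1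
          have huv : u.arith F = v.arith F := by rw [e0, e1]
          have hsz : u.size + v.size ≤ N := by
            have := u'.size_pos
            have := v'.size_pos
            simp only [BDD.size] at hs
            omega
          exact h₁.1 (IH u v hsz h₁.2.2.2.1 h₁.2.2.2.2 huv)

lemma arith_injective {w₁ w₂ : BDD n} (h₁ : w₁.wf) (h₂ : w₂.wf)
    (heq : w₁.arith F = w₂.arith F) : w₁ = w₂ :=
  arith_injective_aux (w₁.size + w₂.size) w₁ w₂ le_rfl h₁ h₂ heq

end Inj

open Classical in
/-- Canonical construction of a reduced ordered BDD from a polynomial. -/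
noncomputable def buildBDD (q : ℕ) {n : ℕ} : ℕ → MvPolynomial (Fin n) (ZMod q) → BDD n
  | 0, p => if constantCoeff p = 1 then BDD.tru else BDD.fls
  | (k+1), p =>
    if h : k < n then
      let u := buildBDD q k (pevalVar (⟨k, h⟩ : Fin n) 0 p)
      let v := buildBDD q k (pevalVar (⟨k, h⟩ : Fin n) 1 p)
      if u = v then u else BDD.node ⟨k, h⟩ u v
    else buildBDD q k p

lemma buildBDD_spec (q : ℕ) [Fact q.Prime] {n : ℕ} (k : ℕ) :
    ∀ p : MvPolynomial (Fin n) (ZMod q), Multilinear p → BinaryPoly p → VarsLt k p →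
      (buildBDD q k p).wf ∧ (buildBDD q k p).level ≤ k ∧
        (buildBDD q k p).arith (ZMod q) = p := by
  induction k with
  | zero =>
    intro p hm hb hv
    have hC : p = C (constantCoeff p) := varsLt_zero_eq_C hv
    have hval : constantCoeff p = 0 ∨ constantCoeff p = 1 := by
      have := hb (fun _ => 0) (fun _ => Or.inl rfl)
      rwa [hC, eval_C] at this
    unfold buildBDD
    split
    · next h =>
      refine ⟨trivial, le_rfl, ?_⟩
      show (1 : MvPolynomial (Fin n) (ZMod q)) = p
      rw [hC, h, C_1]
    · next h =>
      refine ⟨trivial, le_rfl, ?_⟩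
      show (0 : MvPolynomial (Fin n) (ZMod q)) = p
      rcases hval with h0 | h1
      · rw [hC, h0, C_0]
      · exact absurd h1 h
  | succ k ih =>
    intro p hm hb hv
    by_cases h : k < n
    · set i : Fin n := ⟨k, h⟩ with hi
      have hm0 := multilinear_pevalVar hm i (0 : ZMod q)
      have hm1 := multilinear_pevalVar hm i (1 : ZMod q)
      have hb0 := binaryPoly_pevalVar hb i (Or.inl rfl)
      have hb1 := binaryPoly_pevalVar hb i (Or.inr rfl)
      have hv0 := varsLt_pevalVar hv h (0 : ZMod q)
      have hv1 := varsLt_pevalVar hv h (1 : ZMod q)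
      obtain ⟨wfu, lu, au⟩ := ih (pevalVar i 0 p) hm0 hb0 hv0
      obtain ⟨wfv, lv, av⟩ := ih (pevalVar i 1 p) hm1 hb1 hv1
      have hdec := multilinear_decomp hm i
      show (buildBDD q (k+1) p).wf ∧ _
      unfold buildBDD
      rw [dif_pos h]
      by_cases huv : buildBDD q k (pevalVar (⟨k, h⟩ : Fin n) 0 p)
          = buildBDD q k (pevalVar (⟨k, h⟩ : Fin n) 1 p)
      · rw [if_pos huv]
        refine ⟨wfu, le_trans lu (Nat.le_succ k), ?_⟩
        have hpp : pevalVar i 1 p = pevalVar i 0 p := by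
          rw [← au, ← av, huv]
        rw [au]
        conv_rhs => rw [hdec, hpp]
        ring
      · rw [if_neg huv]
        refine ⟨⟨huv, lu, lv, wfu, wfv⟩, le_rfl, ?_⟩
        show (1 - X i) * _ + X i * _ = p
        rw [au, av]
        exact hdec.symm
    · have hv' : VarsLt k p := fun m hm' y hy => lt_of_lt_of_le y.isLt (Nat.le_of_not_lt h)
      obtain ⟨a, b, c⟩ := ih p hm hb hv'
      unfold buildBDD
      rw [dif_neg h]
      exact ⟨a, le_trans b (Nat.le_succ k), c⟩
/-- every binary multilinear polynomial is the arithmetisation of a unique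
reduced ordered BDD. -/
theorem bdd_exists_unique_of_binary_multilinear {q : ℕ} [Fact q.Prime] {n : ℕ}
    (p : MvPolynomial (Fin n) (ZMod q)) (hmul : Multilinear p) (hbin : BinaryPoly p) :
    ∃! w : BDD n, w.wf ∧ w.arith (ZMod q) = p := by
  obtain ⟨hwf, hlev, harith⟩ :=
    buildBDD_spec q n p hmul hbin (fun m hm y hy => y.isLt)
  refine ⟨buildBDD q n p, ⟨hwf, harith⟩, ?_⟩
  rintro w ⟨hw, hwa⟩
  exact arith_injective hw hwf (by rw [hwa, harith])
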